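/- Let E be a finite set, Q a real E×E matrix with nonnegative off-diagonal entries, and set η_i = -∑_j Q_{ij} ≥ 0. Let α₀ = min_{i∈E} η_i and α₁ = max_{i∈E} η_i. Then for every i ∈ E and every t ≥ 0, e^{-α₁ t} ≤ ∑_j (exp(tQ))_{ij} ≤ e^{-α₀ t}. -/

import Mathlib

open Matrix Nat

open NormedSpace in
lemma rowsum_exp_bounds {E : Type} [Fintype E] [DecidableEq E]
    (B : Matrix E E ℝ) (hB : ∀ i j, 0 ≤ B i j) (a b : ℝ) (ha : 0 ≤ a)
    (hrow : ∀ i, a ≤ ∑ j, B i j ∧ ∑ j, B i j ≤ b) (i : E) :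
    Real.exp a ≤ ∑ j, exp B i j ∧ ∑ j, exp B i j ≤ Real.exp b := by
  have hab : a ≤ b := le_trans (hrow i).1 (hrow i).2
  have hb : 0 ≤ b := le_trans ha hab
  have hpow : ∀ (n : ℕ) (i j : E), 0 ≤ (B ^ n) i j := by
    intro n
    induction n with
    | zero => intro i j; simp [Matrix.one_apply]; positivity
    | succ n ih =>
      intro i j
      rw [pow_succ, Matrix.mul_apply]
      exact Finset.sum_nonneg fun k _ => mul_nonneg (ih i k) (hB k j)
  have hpowrow : ∀ (n : ℕ) (i : E),
      a ^ n ≤ ∑ j, (B ^ n) i j ∧ ∑ j, (B ^ n) i j ≤ b ^ n := by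
    intro n
    induction n with
    | zero => intro i; simp [Matrix.one_apply]
    | succ n ih =>
      intro i
      have hrw : ∑ j, (B ^ (n + 1)) i j = ∑ k, B i k * ∑ j, (B ^ n) k j := by
        rw [_root_.pow_succ']
        simp_rw [Matrix.mul_apply, Finset.mul_sum]
        rw [Finset.sum_comm]
      constructor
      · rw [hrw, _root_.pow_succ']
        calc a * a ^ n ≤ (∑ k, B i k) * a ^ n :=
              mul_le_mul_of_nonneg_right (hrow i).1 (pow_nonneg ha n)
          _ = ∑ k, B i k * a ^ n := by rw [Finset.sum_mul]
          _ ≤ ∑ k, B i k * ∑ j, (B ^ n) k j :=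
              Finset.sum_le_sum fun k _ =>
                mul_le_mul_of_nonneg_left (ih k).1 (hB i k)
      · rw [hrw, _root_.pow_succ']
        calc ∑ k, B i k * ∑ j, (B ^ n) k j ≤ ∑ k, B i k * b ^ n :=
              Finset.sum_le_sum fun k _ =>
                mul_le_mul_of_nonneg_left (ih k).2 (hB i k)
          _ = (∑ k, B i k) * b ^ n := by rw [Finset.sum_mul]
          _ ≤ b * b ^ n :=
              mul_le_mul_of_nonneg_right (hrow i).2 (pow_nonneg hb n)
  -- summabilities
  have hga : Summable (fun n : ℕ => a ^ n / (n ! : ℝ)) := Real.summable_pow_div_factorial a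
  have hgb : Summable (fun n : ℕ => b ^ n / (n ! : ℝ)) := Real.summable_pow_div_factorial b
  set S : ℕ → ℝ := fun n => ((n ! : ℝ))⁻¹ * ∑ j, (B ^ n) i j with hS
  have hSle : ∀ n, S n ≤ b ^ n / (n ! : ℝ) := by
    intro n
    rw [hS, div_eq_inv_mul]
    exact mul_le_mul_of_nonneg_left (hpowrow n i).2 (by positivity)
  have hSge : ∀ n, a ^ n / (n ! : ℝ) ≤ S n := by
    intro n
    rw [hS, div_eq_inv_mul]
    exact mul_le_mul_of_nonneg_left (hpowrow n i).1 (by positivity)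
  have hSnonneg : ∀ n, 0 ≤ S n := fun n =>
    le_trans (by positivity) (hSge n)
  have hSsum : Summable S := Summable.of_nonneg_of_le hSnonneg hSle hgb
  -- entrywise formula
  letI : SeminormedRing (Matrix E E ℝ) := Matrix.linftyOpSemiNormedRing
  letI : NormedRing (Matrix E E ℝ) := Matrix.linftyOpNormedRing
  letI : NormedAlgebra ℝ (Matrix E E ℝ) := Matrix.linftyOpNormedAlgebra
  have hsum : Summable (fun n : ℕ => ((n ! : ℝ))⁻¹ • B ^ n) := expSeries_summable' B
  let L : Matrix E E ℝ →ₗ[ℝ] ℝ :=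
    { toFun := fun M => ∑ j, M i j
      map_add' := by intro M N; simp [Finset.sum_add_distrib]
      map_smul' := by intro c M; simp [Finset.mul_sum] }
  have hLcont : Continuous L := LinearMap.continuous_of_finiteDimensional L
  let Lc : Matrix E E ℝ →L[ℝ] ℝ := ⟨L, hLcont⟩
  have key : ∑ j, exp B i j = ∑' n, S n := by
    have : ∑ j, exp B i j = Lc (exp B) := rfl
    rw [this, exp_eq_tsum ℝ, Lc.map_tsum hsum]
    congr 1
    funext n
    show Lc (((n ! : ℝ))⁻¹ • B ^ n) = S n
    rw [Lc.map_smul]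
    rfl
  rw [key]
  have hexp : ∀ x : ℝ, Real.exp x = ∑' n : ℕ, x ^ n / (n ! : ℝ) := by
    intro x
    rw [Real.exp_eq_exp_ℝ, exp_eq_tsum_div]
  constructor
  · rw [hexp a]
    exact Summable.tsum_le_tsum hSge hga hSsum
  · rw [hexp b]
    exact Summable.tsum_le_tsum hSle hSsum hgb

theorem stmt_3 (E : Type) [Fintype E] [DecidableEq E] [Nonempty E]
    (Q : Matrix E E ℝ) (η : E → ℝ)
    (hQoff : ∀ i j, i ≠ j → 0 ≤ Q i j)
    (hη : ∀ i, η i = -∑ j, Q i j)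
    (hηpos : ∀ i, 0 ≤ η i)
    (α₀ α₁ : ℝ)
    (hα₀ : α₀ = Finset.univ.inf' Finset.univ_nonempty η)
    (hα₁ : α₁ = Finset.univ.sup' Finset.univ_nonempty η) :
    ∀ (i : E) (t : ℝ), 0 ≤ t →
      Real.exp (-α₁ * t) ≤ ∑ j, NormedSpace.exp (t • Q) i j ∧
      ∑ j, NormedSpace.exp (t • Q) i j ≤ Real.exp (-α₀ * t) := by
  intro i t ht
  set c : ℝ := Finset.univ.sup' Finset.univ_nonempty (fun k => -Q k k) with hc
  have hcQ : ∀ k, -Q k k ≤ c := fun k => Finset.le_sup' (fun k => -Q k k) (Finset.mem_univ k)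
  have hηc : ∀ k, η k ≤ -Q k k := by
    intro k
    have h1 : -Q k k = η k + ∑ j ∈ Finset.univ.erase k, Q k j := by
      rw [hη k]
      have := Finset.add_sum_erase Finset.univ (Q k) (Finset.mem_univ k)
      rw [← this]
      ring
    rw [h1]
    have : 0 ≤ ∑ j ∈ Finset.univ.erase k, Q k j :=
      Finset.sum_nonneg fun j hj => hQoff k j (Finset.ne_of_mem_erase hj).symm
    linarith
  have hα₁c : α₁ ≤ c := by
    rw [hα₁]
    exact Finset.sup'_le _ _ fun k _ => le_trans (hηc k) (hcQ k)
  have hα₀η : ∀ k, α₀ ≤ η k := by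
    intro k; rw [hα₀]; exact Finset.inf'_le _ (Finset.mem_univ k)
  have hηα₁ : ∀ k, η k ≤ α₁ := by
    intro k; rw [hα₁]; exact Finset.le_sup' _ (Finset.mem_univ k)
  set A : Matrix E E ℝ := Q + c • (1 : Matrix E E ℝ) with hAdef
  have hAapp : ∀ k j, A k j = Q k j + c * (if k = j then 1 else 0) := by
    intro k j
    simp [hAdef, Matrix.one_apply]
  have hAnn : ∀ k j, 0 ≤ A k j := by
    intro k j
    rw [hAapp]
    by_cases h : k = j
    · subst h; simp; linarith [hcQ k]
    · simp [h]; exact hQoff k j h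
  have hArow : ∀ k, ∑ j, A k j = c - η k := by
    intro k
    simp only [hAapp]
    rw [Finset.sum_add_distrib]
    rw [← Finset.mul_sum]
    simp [hη k]
    ring
  set B : Matrix E E ℝ := t • A with hBdef
  have hBnn : ∀ k j, 0 ≤ B k j := fun k j => mul_nonneg ht (hAnn k j)
  have hBrow : ∀ k, t * (c - α₁) ≤ ∑ j, B k j ∧ ∑ j, B k j ≤ t * (c - α₀) := by
    intro k
    have : ∑ j, B k j = t * (c - η k) := by
      simp [hBdef, ← Finset.mul_sum, hArow k]
    rw [this]
    constructor
    · exact mul_le_mul_of_nonneg_left (by linarith [hηα₁ k]) ht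
    · exact mul_le_mul_of_nonneg_left (by linarith [hα₀η k]) ht
  have ha : 0 ≤ t * (c - α₁) := mul_nonneg ht (by linarith)
  have hmain := rowsum_exp_bounds B hBnn (t * (c - α₁)) (t * (c - α₀)) ha hBrow i
  -- decompose exp (t • Q)
  have hsplit : t • Q = (-(t * c)) • (1 : Matrix E E ℝ) + B := by
    rw [hBdef, hAdef]
    rw [smul_add, smul_smul]
    module
  have hdiag : ((-(t * c)) • (1 : Matrix E E ℝ)) = Matrix.diagonal (fun _ => -(t * c)) := by
    ext k j
    by_cases h : k = j <;> simp [Matrix.one_apply, Matrix.diagonal_apply, h]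
  have hcomm : Commute ((-(t * c)) • (1 : Matrix E E ℝ)) B :=
    (Commute.one_left B).smul_left _
  have hexpQ : NormedSpace.exp (t • Q)
      = Matrix.diagonal (fun _ => Real.exp (-(t * c))) * NormedSpace.exp B := by
    rw [hsplit, Matrix.exp_add_of_commute _ _ hcomm, hdiag, Matrix.exp_diagonal]
    congr 1
    funext k
    rw [Pi.exp_def, Real.exp_eq_exp_ℝ]
  have hrowQ : ∑ j, NormedSpace.exp (t • Q) i j
      = Real.exp (-(t * c)) * ∑ j, NormedSpace.exp B i j := by
    rw [hexpQ]
    simp [Matrix.diagonal_mul, Finset.mul_sum]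
  rw [hrowQ]
  have he : (0:ℝ) < Real.exp (-(t * c)) := Real.exp_pos _
  constructor
  · have : Real.exp (-α₁ * t) = Real.exp (-(t * c)) * Real.exp (t * (c - α₁)) := by
      rw [← Real.exp_add]; ring_nf
    rw [this]
    exact mul_le_mul_of_nonneg_left hmain.1 he.le
  · have : Real.exp (-α₀ * t) = Real.exp (-(t * c)) * Real.exp (t * (c - α₀)) := by
      rw [← Real.exp_add]; ring_nf
    rw [this]
    exact mul_le_mul_of_nonneg_left hmain.2 he.le
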